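/- Let q ∈ ℚ_{>1} \ ℕ and let s > t ≥ 1 be coprime positive integers. If there exists a nonzero β ∈ N₀[q] with ℓ = min L(β) and L = max L(β) such that (s−t) divides t·L − s·ℓ in ℕ, then there exists a nonzero β' ∈ N₀[q] with ρ(β') = s/t. -/

import Mathlib

open Polynomial

/-- `N₀[q]`: the additive submonoid of ℚ generated by the powers of `q`. -/
def NmonQ (q : ℚ) : AddSubmonoid ℚ := AddSubmonoid.closure (Set.range fun n : ℕ => q ^ n)

/-- Evaluation of a polynomial with ℕ-coefficients at a rational number. -/
def pevQ (q : ℚ) (f : Polynomial ℕ) : ℚ := Polynomial.eval₂ (Nat.castRingHom ℚ) q f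

/-- Lengths of factorizations of `x` in `N₀[q]`. -/
def LSetQ (q : ℚ) (x : ℚ) : Set ℕ :=
  {n | ∃ f : Polynomial ℕ, pevQ q f = x ∧ f.eval 1 = n}

lemma pevQ_add (q : ℚ) (f g : Polynomial ℕ) : pevQ q (f + g) = pevQ q f + pevQ q g :=
  eval₂_add _ _

lemma pevQ_X_pow (q : ℚ) (n : ℕ) : pevQ q (X ^ n) = q ^ n := by
  simp [pevQ]

lemma pevQ_sum (q : ℚ) (f : Polynomial ℕ) :
    pevQ q f = ∑ i ∈ f.support, (f.coeff i : ℚ) * q ^ i := by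
  rw [pevQ, eval₂_eq_sum, Polynomial.sum]
  simp

lemma pevQ_nonneg {q : ℚ} (hq : 0 ≤ q) (f : Polynomial ℕ) : 0 ≤ pevQ q f := by
  rw [pevQ_sum]
  exact Finset.sum_nonneg fun i _ => by positivity

lemma term_le_pevQ {q : ℚ} (hq : 0 ≤ q) (f : Polynomial ℕ) (m : ℕ) :
    (f.coeff m : ℚ) * q ^ m ≤ pevQ q f := by
  rw [pevQ_sum]
  by_cases h : m ∈ f.support
  · exact Finset.single_le_sum (f := fun i => (f.coeff i : ℚ) * q ^ i)
      (fun i _ => by positivity) h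
  · rw [Polynomial.notMem_support_iff.mp h]
    simpa using Finset.sum_nonneg (fun i (_ : i ∈ f.support) => by positivity :
      ∀ i ∈ f.support, (0:ℚ) ≤ (f.coeff i : ℚ) * q ^ i)

lemma den_pow_mul_pow {q : ℚ} (i : ℕ) : (q.den : ℚ) ^ i * q ^ i = (q.num : ℚ) ^ i := by
  rw [← mul_pow, mul_comm, Rat.mul_den_eq_num]

/-- If all exponents of `g` are `≤ M`, then `den^M * g(q)` is an integer. -/
lemma pev_int (q : ℚ) (g : Polynomial ℕ) (M : ℕ) (h : ∀ m, g.coeff m ≠ 0 → m ≤ M) :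
    ∃ z : ℤ, (q.den : ℚ) ^ M * pevQ q g = (z : ℚ) := by
  refine ⟨∑ i ∈ g.support, (g.coeff i : ℤ) * q.num ^ i * (q.den : ℤ) ^ (M - i), ?_⟩
  rw [pevQ_sum, Finset.mul_sum]
  push_cast
  refine Finset.sum_congr rfl fun i hi => ?_
  have hiM : i ≤ M := h i (Polynomial.mem_support_iff.mp hi)
  have hsplit : (q.den : ℚ) ^ M = (q.den : ℚ) ^ i * (q.den : ℚ) ^ (M - i) := by
    rw [← pow_add, Nat.add_sub_cancel' hiM]
  rw [hsplit]
  calc ((q.den:ℚ)^i * (q.den:ℚ)^(M-i)) * ((g.coeff i : ℚ) * q ^ i)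
      = (g.coeff i : ℚ) * ((q.den:ℚ)^i * q ^ i) * (q.den:ℚ)^(M-i) := by ring
    _ = (g.coeff i : ℚ) * (q.num:ℚ)^i * (q.den:ℚ)^(M-i) := by rw [den_pow_mul_pow]

/-- If all exponents of `g` are `≤ M` and `1 ≤ M`, then
`den^M * g(q) = (coeff M) * num^M + den * w` for some integer `w`. -/
lemma pev_mod (q : ℚ) (g : Polynomial ℕ) (M : ℕ) (hM : 1 ≤ M)
    (h : ∀ m, g.coeff m ≠ 0 → m ≤ M) :
    ∃ w : ℤ, (q.den : ℚ) ^ M * pevQ q g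
      = (g.coeff M : ℚ) * (q.num : ℚ) ^ M + (q.den : ℚ) * (w : ℚ) := by
  have hsplit : (monomial M) (g.coeff M) + g.erase M = g := g.monomial_add_erase M
  have herase : ∀ m, (g.erase M).coeff m ≠ 0 → m ≤ M - 1 := by
    intro m hm
    rcases eq_or_ne m M with rfl | hne
    · simp [Polynomial.erase_same] at hm
    · rw [Polynomial.erase_ne _ hne] at hm
      have := h m hm
      omega
  obtain ⟨z, hz⟩ := pev_int q (g.erase M) (M - 1) herase
  refine ⟨z, ?_⟩
  have hmon : pevQ q ((monomial M) (g.coeff M)) = (g.coeff M : ℚ) * q ^ M := by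
    simp [pevQ]
  have : pevQ q g = (g.coeff M : ℚ) * q ^ M + pevQ q (g.erase M) := by
    rw [← hsplit, pevQ_add, hmon]
    rw [hsplit]
  rw [this, mul_add]
  have hMsplit : (q.den : ℚ) ^ M = (q.den : ℚ) * (q.den : ℚ) ^ (M - 1) := by
    rw [← pow_succ']
    congr 1
    omega
  rw [hMsplit, mul_assoc, mul_assoc, hz]
  have h2 : ((q.den : ℚ) * (q.den : ℚ) ^ (M-1)) * ((g.coeff M : ℚ) * q ^ M)
      = (g.coeff M : ℚ) * ((q.den : ℚ)^M * q ^ M) := by rw [← hMsplit]; ring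
  rw [← mul_assoc, h2, den_pow_mul_pow]

/-- The denominator is at least 2 when `q` is not a natural number. -/
lemma den_ge_two {q : ℚ} (h1 : 1 < q) (hq : ¬ ∃ n : ℕ, q = (n : ℚ)) : 2 ≤ q.den := by
  by_contra h
  have hd1 : q.den = 1 := by have := q.pos; omega
  have hnum : (0:ℤ) < q.num := Rat.num_pos.mpr (by linarith)
  refine hq ⟨q.num.toNat, ?_⟩
  have hqe : (q.num : ℚ) / (q.den : ℚ) = q := Rat.num_div_den q
  rw [hd1] at hqe
  simp at hqe
  have hc : ((q.num.toNat : ℕ) : ℚ) = (q.num : ℚ) := by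
    exact_mod_cast congrArg (fun z : ℤ => (z : ℚ)) (Int.toNat_of_nonneg hnum.le)
  rw [hc, hqe]

lemma den_not_dvd_num_pow {q : ℚ} (h1 : 1 < q) (hq : ¬ ∃ n : ℕ, q = (n : ℚ))
    (M : ℕ) : ¬ ((q.den : ℤ) ∣ q.num ^ M) := by
  intro hdvd
  have h2 : q.den ∣ q.num.natAbs ^ M := by
    have := Int.natAbs_dvd_natAbs.mpr hdvd
    simpa [Int.natAbs_pow] using this
  have hcop : Nat.Coprime (q.num.natAbs ^ M) q.den := (q.reduced).pow_left M
  have : q.den ∣ Nat.gcd (q.num.natAbs ^ M) q.den := Nat.dvd_gcd h2 dvd_rfl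
  rw [hcop] at this
  have h2 := den_ge_two h1 hq
  have := Nat.le_of_dvd one_pos this
  omega

lemma decompose_rep (g : Polynomial ℕ) (N : ℕ) (hc : g.coeff N ≠ 0) :
    g.erase N + monomial N (g.coeff N - 1) + X ^ N = g := by
  ext j
  rw [Polynomial.coeff_add, Polynomial.coeff_add, Polynomial.coeff_X_pow,
    Polynomial.coeff_monomial]
  rcases eq_or_ne j N with rfl | hne
  · rw [Polynomial.erase_same]
    simp
    omega
  · rw [Polynomial.erase_ne _ hne]
    simp [hne, Ne.symm hne]

lemma step_lemma (q : ℚ) (h1 : 1 < q) (hq : ¬ ∃ n : ℕ, q = (n : ℚ))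
    (β : ℚ) (hβ : β ∈ NmonQ q) (ℓ L : ℕ)
    (hℓ : IsLeast (LSetQ q β) ℓ) (hL : IsGreatest (LSetQ q β) L) :
    ∃ β', β' ∈ NmonQ q ∧ β' ≠ 0 ∧
      IsLeast (LSetQ q β') (ℓ+1) ∧ IsGreatest (LSetQ q β') (L+1) := by
  obtain ⟨⟨f, hf, hfl⟩, hlow⟩ := hℓ
  obtain ⟨hLmem, hupp⟩ := hL
  have hq0 : (0:ℚ) < q := lt_trans one_pos h1
  have hβnn : 0 ≤ β := hf ▸ pevQ_nonneg hq0.le f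
  obtain ⟨N0, hN0⟩ := pow_unbounded_of_one_lt β h1
  set N := max N0 (f.natDegree + 1) with hNdef
  have hβN : β < q ^ N :=
    lt_of_lt_of_le hN0 (pow_le_pow_right₀ h1.le (le_max_left _ _))
  have hDN : f.natDegree + 1 ≤ N := le_max_right _ _
  have hN1 : 1 ≤ N := by omega
  have hfdeg : ∀ m, f.coeff m ≠ 0 → m ≤ N - 1 := fun m hm => by
    have := Polynomial.le_natDegree_of_ne_zero hm; omega
  obtain ⟨zβ, hzβ⟩ := pev_int q f (N-1) hfdeg
  rw [hf] at hzβ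
  set β' := β + q ^ N with hβ'def
  -- Key: any representation of β' has a nonzero coefficient at X^N
  have hkey : ∀ g : Polynomial ℕ, pevQ q g = β' → g.coeff N ≠ 0 := by
    intro g hg
    have hdeg : ∀ m, g.coeff m ≠ 0 → m ≤ N := by
      by_contra hcon
      push_neg at hcon
      obtain ⟨m, hm0, hmN⟩ := hcon
      set M := g.natDegree with hM
      have hMN : N < M := lt_of_lt_of_le hmN (Polynomial.le_natDegree_of_ne_zero hm0)
      have hgne : g ≠ 0 := fun h0 => hm0 (by simp [h0])
      have hgM : g.coeff M ≠ 0 := Polynomial.leadingCoeff_ne_zero.mpr hgne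
      have hterm : (g.coeff M : ℚ) * q ^ M ≤ β' := hg ▸ term_le_pevQ hq0.le g M
      have hqNM : q ^ N < q ^ M := pow_lt_pow_right₀ h1 hMN
      have hqM : (0:ℚ) < q ^ M := by positivity
      have hc1 : g.coeff M = 1 := by
        have h2 : (g.coeff M : ℚ) * q ^ M < 2 * q ^ M := by
          calc (g.coeff M : ℚ) * q ^ M ≤ β + q ^ N := hterm
            _ < q ^ N + q ^ N := by linarith
            _ < 2 * q ^ M := by linarith
        have h3 : (g.coeff M : ℚ) < 2 := lt_of_mul_lt_mul_right h2 hqM.le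
        have h4 : g.coeff M < 2 := by exact_mod_cast h3
        omega
      obtain ⟨w, hw⟩ := pev_mod q g M (by omega)
        (fun m hm => Polynomial.le_natDegree_of_ne_zero hm)
      rw [hg, hc1] at hw
      have e1 : (q.den:ℚ)^M * β' = (q.den:ℚ)^(M-N+1) * ((q.den:ℚ)^(N-1) * β)
          + (q.den:ℚ)^(M-N) * ((q.den:ℚ)^N * q^N) := by
        rw [hβ'def, mul_add, ← mul_assoc, ← mul_assoc, ← pow_add, ← pow_add]
        have e11 : M - N + 1 + (N - 1) = M := by omega
        have e12 : M - N + N = M := by omega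
        rw [e11, e12]
      rw [hzβ, den_pow_mul_pow] at e1
      rw [e1] at hw
      push_cast at hw
      have e3 : (q.den:ℤ)^(M-N+1) * zβ + (q.den:ℤ)^(M-N) * q.num^N
          = q.num^M + q.den * w := by
        have := hw
        rw [one_mul] at this
        exact_mod_cast this
      have hdvd : (q.den:ℤ) ∣ q.num ^ M := by
        have h4 : q.num ^ M = (q.den:ℤ)^(M-N+1) * zβ + (q.den:ℤ)^(M-N) * q.num^N
            - q.den * w := by linarith
        rw [h4]
        refine dvd_sub (dvd_add ?_ ?_) ?_
        · exact Dvd.dvd.mul_right (dvd_pow_self _ (by omega : M - N + 1 ≠ 0)) _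
        · exact Dvd.dvd.mul_right (dvd_pow_self _ (by omega : M - N ≠ 0)) _
        · exact Dvd.dvd.mul_right dvd_rfl _
      exact den_not_dvd_num_pow h1 hq M hdvd
    by_contra hc
    have hdeg' : ∀ m, g.coeff m ≠ 0 → m ≤ N - 1 := by
      intro m hm
      have h5 := hdeg m hm
      rcases eq_or_ne m N with rfl | hne
      · exact absurd hc hm
      · omega
    obtain ⟨z, hz⟩ := pev_int q g (N-1) hdeg'
    rw [hg] at hz
    have eN : (q.den:ℚ)^(N-1) * (q.den:ℚ) = (q.den:ℚ)^N := by
      rw [← pow_succ]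
      congr 1
      omega
    have e2 : (z:ℚ) * (q.den:ℚ) = (zβ:ℚ) * (q.den:ℚ) + (q.num:ℚ)^N := by
      calc (z:ℚ) * (q.den:ℚ) = ((q.den:ℚ)^(N-1) * (β + q^N)) * (q.den:ℚ) := by rw [hz]
        _ = ((q.den:ℚ)^(N-1) * β) * (q.den:ℚ) + ((q.den:ℚ)^(N-1) * (q.den:ℚ)) * q^N := by
            ring
        _ = (zβ:ℚ) * (q.den:ℚ) + (q.den:ℚ)^N * q^N := by rw [hzβ, eN]
        _ = (zβ:ℚ) * (q.den:ℚ) + (q.num:ℚ)^N := by rw [den_pow_mul_pow]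
    have e3 : z * (q.den:ℤ) = zβ * (q.den:ℤ) + q.num^N := by exact_mod_cast e2
    have hdvd : (q.den:ℤ) ∣ q.num ^ N := ⟨z - zβ, by linarith⟩
    exact den_not_dvd_num_pow h1 hq N hdvd
  -- The length set of β' is the shift of that of β
  have hset : LSetQ q β' = (fun k => k + 1) '' LSetQ q β := by
    ext m
    constructor
    · rintro ⟨g, hg, hgl⟩
      have hcN := hkey g hg
      set h : Polynomial ℕ := g.erase N + monomial N (g.coeff N - 1) with hhdef
      have hsum : h + X ^ N = g := decompose_rep g N hcN
      have hpev : pevQ q h = β := by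
        have := pevQ_add q h (X ^ N)
        rw [hsum, pevQ_X_pow, hg, hβ'def] at this
        linarith
      refine ⟨h.eval 1, ⟨h, hpev, rfl⟩, ?_⟩
      have hev : g.eval 1 = h.eval 1 + (X ^ N : Polynomial ℕ).eval 1 := by
        rw [← hsum, Polynomial.eval_add]
      simp only [Polynomial.eval_pow, Polynomial.eval_X, one_pow] at hev
      show h.eval 1 + 1 = m
      omega
    · rintro ⟨k, ⟨h, hh, hhl⟩, rfl⟩
      exact ⟨h + X ^ N, by rw [pevQ_add, pevQ_X_pow, hh],
        by simp [Polynomial.eval_add, hhl]⟩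
  have hqN : (0:ℚ) < q ^ N := by positivity
  refine ⟨β', AddSubmonoid.add_mem _ hβ (AddSubmonoid.subset_closure ⟨N, rfl⟩), ?_, ?_, ?_⟩
  · rw [hβ'def]
    positivity
  · constructor
    · rw [hset]
      exact ⟨ℓ, ⟨f, hf, hfl⟩, rfl⟩
    · intro m hm
      rw [hset] at hm
      obtain ⟨k, hk, rfl⟩ := hm
      exact Nat.add_le_add_right (hlow hk) 1
  · constructor
    · rw [hset]
      exact ⟨L, hLmem, rfl⟩
    · intro m hm
      rw [hset] at hm
      obtain ⟨k, hk, rfl⟩ := hm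
      exact Nat.add_le_add_right (hupp hk) 1

lemma iterate_lemma (q : ℚ) (h1 : 1 < q) (hq : ¬ ∃ n : ℕ, q = (n : ℚ)) :
    ∀ (d : ℕ) (β : ℚ), β ∈ NmonQ q → β ≠ 0 → ∀ ℓ L : ℕ,
      IsLeast (LSetQ q β) ℓ → IsGreatest (LSetQ q β) L →
      ∃ β', β' ∈ NmonQ q ∧ β' ≠ 0 ∧
        IsLeast (LSetQ q β') (ℓ + d) ∧ IsGreatest (LSetQ q β') (L + d) := by
  intro d
  induction d with
  | zero => intro β hβ hβ0 ℓ L h1' h2'; exact ⟨β, hβ, hβ0, by simpa using h1', by simpa using h2'⟩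
  | succ d ih =>
    intro β hβ hβ0 ℓ L h1' h2'
    obtain ⟨β1, hβ1, hβ10, hle1, hge1⟩ := step_lemma q h1 hq β hβ ℓ L h1' h2'
    obtain ⟨β', hβ', hβ'0, hle, hge⟩ := ih β1 hβ1 hβ10 (ℓ+1) (L+1) hle1 hge1
    refine ⟨β', hβ', hβ'0, ?_, ?_⟩
    · have : ℓ + 1 + d = ℓ + (d + 1) := by omega
      rwa [this] at hle
    · have : L + 1 + d = L + (d + 1) := by omega
      rwa [this] at hge

lemma eval_one_eq_zero {f : Polynomial ℕ} (h : f.eval 1 = 0) : f = 0 := by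
  have hsum : f.eval 1 = ∑ i ∈ f.support, f.coeff i := by
    rw [Polynomial.eval_eq_sum, Polynomial.sum]
    simp
  rw [hsum] at h
  ext j
  by_cases hj : j ∈ f.support
  · simpa using Finset.sum_eq_zero_iff.mp h j hj
  · simpa using Polynomial.notMem_support_iff.mp hj

/-- Let `q ∈ ℚ_{>1} \ ℕ` and coprime integers `s > t ≥ 1`. If some nonzero `β ∈ N₀[q]`
with `ℓ = min L(β)`, `L = max L(β)` satisfies `(s − t) ∣ (t·L − s·ℓ)` in ℕ, then some
nonzero `β' ∈ N₀[q]` has elasticity exactly `s/t`. -/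
theorem stmt18 (q : ℚ) (h1 : 1 < q) (hq : ¬ ∃ n : ℕ, q = (n : ℚ))
    (s t : ℕ) (ht : 1 ≤ t) (hst : t < s) (hco : Nat.Coprime s t)
    (β : ℚ) (hβ : β ∈ NmonQ q) (hβ0 : β ≠ 0) (ℓ L : ℕ)
    (hℓ : IsLeast (LSetQ q β) ℓ) (hL : IsGreatest (LSetQ q β) L)
    (hdvd : ∃ d : ℕ, (t : ℤ) * L - (s : ℤ) * ℓ = ((s : ℤ) - t) * d) :
    ∃ β' ∈ NmonQ q, β' ≠ 0 ∧ ∃ l' L' : ℕ,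
      IsLeast (LSetQ q β') l' ∧ IsGreatest (LSetQ q β') L' ∧
      (L' : ℚ) / (l' : ℚ) = (s : ℚ) / (t : ℚ) := by
  obtain ⟨d, hd⟩ := hdvd
  obtain ⟨β', hβ'mem, hβ'0, hle, hge⟩ := iterate_lemma q h1 hq d β hβ hβ0 ℓ L hℓ hL
  refine ⟨β', hβ'mem, hβ'0, ℓ + d, L + d, hle, hge, ?_⟩
  have hℓ1 : 1 ≤ ℓ := by
    by_contra hcon
    have hℓ0 : ℓ = 0 := by omega
    obtain ⟨f, hf, hfl⟩ := hℓ.1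
    rw [hℓ0] at hfl
    have hf0 : f = 0 := eval_one_eq_zero hfl
    exact hβ0 (by rw [← hf, hf0]; simp [pevQ])
  have hZ : (t:ℤ) * ((L:ℤ) + d) = (s:ℤ) * ((ℓ:ℤ) + d) := by linear_combination hd
  have hpos : (0:ℚ) < (ℓ:ℚ) + (d:ℚ) := by
    have : (1:ℚ) ≤ (ℓ:ℚ) := by exact_mod_cast hℓ1
    have : (0:ℚ) ≤ (d:ℚ) := by positivity
    linarith
  have ht0 : (0:ℚ) < (t:ℚ) := by exact_mod_cast ht
  have hcast : ((L:ℚ) + d) * t = s * ((ℓ:ℚ) + d) := by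
    have : ((L:ℤ) + d) * t = (s:ℤ) * ((ℓ:ℤ) + d) := by linarith
    exact_mod_cast this
  push_cast
  rw [div_eq_div_iff hpos.ne' ht0.ne']
  exact hcast
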